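/- Let K be a field, G a finite group, and C a nonzero right ideal of KG such that C * C = C (Schur product). Then there exists a subgroup H \leq G such that C equals the right ideal generated by \sum_{h \in H} h, i.e., C is the induced module K_H^G realized in KG; consequently d(C) \cdot dim_K(C) = |G|. -/

import Mathlib

open MonoidAlgebra

attribute [local instance] Classical.propDecidable

/-- Coefficientwise (Schur) product on the group algebra. -/
noncomputable def schur {K G : Type*} [Semiring K] (f g : MonoidAlgebra K G) :
    MonoidAlgebra K G :=
  MonoidAlgebra.ofCoeff (Finsupp.zipWith (· * ·) (mul_zero 0) f.coeff g.coeff)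

/-- `C` is a right ideal of the group algebra. -/
def IsRightIdeal {K G : Type*} [Field K] [Group G]
    (C : Submodule K (MonoidAlgebra K G)) : Prop :=
  ∀ c ∈ C, ∀ v : MonoidAlgebra K G, c * v ∈ C

set_option linter.unusedSectionVars false
set_option linter.unnecessarySimpa false
set_option linter.unusedVariables false
set_option maxHeartbeats 1000000

section helpers
variable {K G : Type*} [Field K] [Group G] [Fintype G]

lemma schur_apply (f g : MonoidAlgebra K G) (x : G) : (schur f g).coeff x = f.coeff x * g.coeff x :=
  Finsupp.zipWith_apply (hf := mul_zero 0)

noncomputable def ind (S : Finset G) : MonoidAlgebra K G :=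
  ∑ x ∈ S, MonoidAlgebra.single x (1:K)

lemma ind_apply (S : Finset G) (g : G) :
    (ind S : MonoidAlgebra K G).coeff g = if g ∈ S then 1 else 0 := by
  classical
  rw [ind, MonoidAlgebra.coeff_sum, Finset.sum_apply']
  simp [MonoidAlgebra.coeff_single, Finsupp.single_apply, Finset.sum_ite_eq]

lemma ind_support (S : Finset G) : (ind S : MonoidAlgebra K G).coeff.support = S := by
  ext g
  simp [Finsupp.mem_support_iff, ind_apply]

lemma mul_single_apply' (f : MonoidAlgebra K G) (x y : G) :
    (f * MonoidAlgebra.single x (1:K)).coeff y = f.coeff (y * x⁻¹) := by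
  rw [MonoidAlgebra.coeff_mul_single_apply, mul_one]

variable (C : Submodule K (MonoidAlgebra K G))

/-- Lemma A: indicator of the support of any element of a Schur-closed subspace
belongs to the subspace. -/
lemma ind_supp_mem (hs : ∀ a ∈ C, ∀ b ∈ C, schur a b ∈ C) :
    ∀ (n : ℕ) (c : MonoidAlgebra K G), c ∈ C → (c.coeff.support.image c.coeff).card ≤ n →
      ind c.coeff.support ∈ C := by
  intro n
  induction n with
  | zero =>
    intro c hc hcard
    have : c.coeff.support.image c.coeff = ∅ := Finset.card_eq_zero.mp (Nat.le_zero.mp hcard)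
    have hsupp : c.coeff.support = ∅ := by
      by_contra h
      obtain ⟨x, hx⟩ := Finset.nonempty_iff_ne_empty.mpr h
      exact absurd this (Finset.ne_empty_of_mem (Finset.mem_image_of_mem c.coeff hx))
    rw [hsupp]
    simpa [ind] using C.zero_mem
  | succ n ih =>
    intro c hc hcard
    by_cases hsupp : c.coeff.support = ∅
    · rw [hsupp]; simpa [ind] using C.zero_mem
    obtain ⟨x₀, hx₀⟩ := Finset.nonempty_iff_ne_empty.mpr hsupp
    set v : K := c.coeff x₀ with hv
    have hvne : v ≠ 0 := Finsupp.mem_support_iff.mp hx₀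
    -- c' kills the coordinates where c takes the value v
    set c' : MonoidAlgebra K G := schur c c - v • c with hc'
    have hc'mem : c' ∈ C := C.sub_mem (hs c hc c hc) (C.smul_mem v hc)
    have hc'app : ∀ y, c'.coeff y = c.coeff y * (c.coeff y - v) := by
      intro y
      rw [hc', MonoidAlgebra.coeff_sub, Finsupp.sub_apply, schur_apply, MonoidAlgebra.coeff_smul, Finsupp.smul_apply, smul_eq_mul]
      ring
    have hc'supp : c'.coeff.support = c.coeff.support.filter (fun y => c.coeff y ≠ v) := by
      ext y
      simp only [Finsupp.mem_support_iff, hc'app, Finset.mem_filter, mul_ne_zero_iff,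
        sub_ne_zero]
    -- the values of c' form a smaller set
    have hcard' : (c'.coeff.support.image c'.coeff).card ≤ n := by
      have hsub : c'.coeff.support.image c'.coeff ⊆
          Finset.image (fun w => w * (w - v)) ((c.coeff.support.image c.coeff).erase v) := by
        intro w hw
        obtain ⟨y, hy, rfl⟩ := Finset.mem_image.mp hw
        rw [hc'supp] at hy
        obtain ⟨hy1, hy2⟩ := Finset.mem_filter.mp hy
        exact Finset.mem_image.mpr ⟨c.coeff y, Finset.mem_erase.mpr ⟨hy2,
          Finset.mem_image_of_mem c.coeff hy1⟩, (hc'app y).symm⟩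
      calc (c'.coeff.support.image c'.coeff).card
          ≤ _ := Finset.card_le_card hsub
        _ ≤ ((c.coeff.support.image c.coeff).erase v).card := Finset.card_image_le
        _ ≤ (c.coeff.support.image c.coeff).card - 1 := by
            rw [Finset.card_erase_of_mem (Finset.mem_image_of_mem c.coeff hx₀)]
        _ ≤ n := by omega
    have hindc' : ind c'.coeff.support ∈ C := ih c' hc'mem hcard'
    -- c'' is v times the indicator of the v-level set of c
    set T : Finset G := c.coeff.support.filter (fun y => c.coeff y = v) with hT
    set c'' : MonoidAlgebra K G := c - schur c (ind c'.coeff.support) with hc''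
    have hc''mem : c'' ∈ C := C.sub_mem hc (hs c hc _ hindc')
    have hmem' : ∀ y : G, y ∈ c'.coeff.support ↔ (c.coeff y ≠ 0 ∧ c.coeff y ≠ v) := by
      intro y
      rw [hc'supp]
      simp [Finset.mem_filter, Finsupp.mem_support_iff, and_comm]
    have hc''eq : c'' = v • ind T := by
      ext y
      rw [hc'', MonoidAlgebra.coeff_sub, Finsupp.sub_apply, schur_apply, ind_apply, MonoidAlgebra.coeff_smul, Finsupp.smul_apply, ind_apply,
        smul_eq_mul]
      by_cases h1 : c.coeff y = v
      · have h0 : c.coeff y ≠ 0 := h1 ▸ hvne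
        have : y ∈ T := by rw [hT]; simp [Finset.mem_filter, Finsupp.mem_support_iff, h0, h1, hvne]
        have hn : y ∉ c'.coeff.support := by rw [hmem' y]; tauto
        simp [hn, this, h1]
      · by_cases h0 : c.coeff y = 0
        · have : y ∉ T := by rw [hT]; simp [Finset.mem_filter, Finsupp.mem_support_iff, h0]
          have hn : y ∉ c'.coeff.support := by rw [hmem' y]; tauto
          simp [hn, this, h0]
        · have : y ∉ T := by
            rw [hT]; simp [Finset.mem_filter, h1]
          have hn : y ∈ c'.coeff.support := by rw [hmem' y]; tauto
          simp [hn, this]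
    have hindT : ind T ∈ C := by
      have := C.smul_mem v⁻¹ hc''mem
      rwa [hc''eq, smul_smul, inv_mul_cancel₀ hvne, one_smul] at this
    -- support of c is the disjoint union of supp c' and T
    have hsplit : (ind c.coeff.support : MonoidAlgebra K G) = ind c'.coeff.support + ind T := by
      ext y
      rw [MonoidAlgebra.coeff_add, Finsupp.add_apply, ind_apply, ind_apply, ind_apply]
      by_cases h1 : c.coeff y = v
      · have h0 : c.coeff y ≠ 0 := h1 ▸ hvne
        have hyT : y ∈ T := by rw [hT]; simp [Finset.mem_filter, Finsupp.mem_support_iff, h0, h1, hvne]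
        have hn : y ∉ c'.coeff.support := by rw [hmem' y]; tauto
        simp [hn, hyT, Finsupp.mem_support_iff, h0]
      · by_cases h0 : c.coeff y = 0
        · have hyT : y ∉ T := by rw [hT]; simp [Finset.mem_filter, Finsupp.mem_support_iff, h0]
          have hn : y ∉ c'.coeff.support := by rw [hmem' y]; tauto
          simp [hn, hyT, Finsupp.mem_support_iff, h0]
        · have hyT : y ∉ T := by rw [hT]; simp [Finset.mem_filter, h1]
          have hn : y ∈ c'.coeff.support := by rw [hmem' y]; tauto
          simp [hn, hyT, Finsupp.mem_support_iff, h0]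
    rw [hsplit]
    exact C.add_mem hindc' hindT

lemma ind_supp_mem' (hs : ∀ a ∈ C, ∀ b ∈ C, schur a b ∈ C) (c : MonoidAlgebra K G)
    (hc : c ∈ C) : ind c.coeff.support ∈ C :=
  ind_supp_mem C hs _ c hc le_rfl


variable (C : Submodule K (MonoidAlgebra K G))

/-- the class of `x`: all `y` on which every element of `C` agrees with its value at `x` -/
noncomputable def cl (x : G) : Finset G :=
  Finset.univ.filter (fun y => ∀ c ∈ C, (c : MonoidAlgebra K G).coeff y = c.coeff x)

lemma mem_cl_iff {x y : G} : y ∈ cl C x ↔ ∀ c ∈ C, (c : MonoidAlgebra K G).coeff y = c.coeff x := by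
  simp [cl]

lemma mem_cl_self (x : G) : x ∈ cl C x := (mem_cl_iff C).mpr fun c _ => rfl

lemma cl_symm {x y : G} (h : y ∈ cl C x) : x ∈ cl C y := by
  rw [mem_cl_iff] at h ⊢
  intro c hc
  exact (h c hc).symm

lemma cl_eq_of_mem {x y : G} (h : y ∈ cl C x) : cl C y = cl C x := by
  ext z
  rw [mem_cl_iff, mem_cl_iff] at *
  constructor
  · intro hz c hc; rw [hz c hc, h c hc]
  · intro hz c hc; rw [hz c hc, ← h c hc]

lemma cl_translate (hI : IsRightIdeal C) {x y : G} (g : G) (h : y ∈ cl C x) :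
    y * g ∈ cl C (x * g) := by
  rw [mem_cl_iff] at h ⊢
  intro c hc
  have hcg : c * MonoidAlgebra.single g⁻¹ (1:K) ∈ C := hI c hc _
  have := h _ hcg
  rw [MonoidAlgebra.coeff_mul_single_apply, MonoidAlgebra.coeff_mul_single_apply, mul_one, mul_one] at this
  simpa using this

lemma cl_translate_iff (hI : IsRightIdeal C) {x y : G} (g : G) :
    y * g ∈ cl C (x * g) ↔ y ∈ cl C x := by
  constructor
  · intro h
    have := cl_translate C hI g⁻¹ h
    simpa using this
  · exact cl_translate C hI g

lemma mem_cl_iff_div (hI : IsRightIdeal C) {x y : G} :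
    y ∈ cl C x ↔ y * x⁻¹ ∈ cl C 1 := by
  have := (cl_translate_iff C hI (x := 1) (y := y * x⁻¹) x).symm
  simp only [inv_mul_cancel_right, one_mul] at this
  exact this.symm

/-- every coordinate supports some element of C -/
lemma exists_ne_zero_at (hI : IsRightIdeal C) (hC : C ≠ ⊥) (x : G) :
    ∃ c ∈ C, (c : MonoidAlgebra K G).coeff x ≠ 0 := by
  obtain ⟨c, hcC, hcne⟩ := Submodule.exists_mem_ne_zero_of_ne_bot hC
  obtain ⟨y, hy⟩ : ∃ y, c.coeff y ≠ 0 := by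
    by_contra h
    push_neg at h
    exact hcne (MonoidAlgebra.ext (Finsupp.ext h))
  refine ⟨c * MonoidAlgebra.single (y⁻¹ * x) 1, hI c hcC _, ?_⟩
  rw [MonoidAlgebra.coeff_mul_single_apply, mul_one]
  simpa using hy

/-- Lemma B: the indicator of every class belongs to C. -/
lemma ind_cl_mem (hI : IsRightIdeal C) (hC : C ≠ ⊥)
    (hs : ∀ a ∈ C, ∀ b ∈ C, schur a b ∈ C) (x : G) :
    (ind (cl C x) : MonoidAlgebra K G) ∈ C := by
  obtain ⟨c₀, hc₀C, hc₀x⟩ := exists_ne_zero_at C hI hC x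
  have key : ∀ n (B : Finset G), B.card ≤ n → (ind B : MonoidAlgebra K G) ∈ C → x ∈ B →
      (ind (cl C x) : MonoidAlgebra K G) ∈ C := by
    intro n
    induction n with
    | zero => intro B hB hBC hxB; exact absurd (Finset.card_pos.mpr ⟨x, hxB⟩) (by omega)
    | succ n ih =>
      intro B hB hBC hxB
      by_cases hsub : ∀ y ∈ B, y ∈ cl C x
      · have : B = cl C x := by
          apply Finset.Subset.antisymm hsub
          intro y hy
          have h1 : (ind B : MonoidAlgebra K G).coeff y = (ind B).coeff x := (mem_cl_iff C).mp hy _ hBC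
          rw [ind_apply, ind_apply, if_pos hxB] at h1
          by_contra hyB
          rw [if_neg hyB] at h1
          exact one_ne_zero h1.symm
        rwa [← this]
      push_neg at hsub
      obtain ⟨y, hyB, hy⟩ := hsub
      rw [mem_cl_iff] at hy
      push_neg at hy
      obtain ⟨c, hcC, hcne⟩ := hy
      set d : MonoidAlgebra K G := schur (ind B) c - (c.coeff y) • ind B with hd
      have hdC : d ∈ C := C.sub_mem (hs _ hBC _ hcC) (C.smul_mem _ hBC)
      have hdapp : ∀ z, d.coeff z = (if z ∈ B then (1:K) else 0) * (c.coeff z - c.coeff y) := by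
        intro z
        rw [hd, MonoidAlgebra.coeff_sub, Finsupp.sub_apply, schur_apply, MonoidAlgebra.coeff_smul, Finsupp.smul_apply, ind_apply, smul_eq_mul]
        ring
      have hdx : d.coeff x ≠ 0 := by
        rw [hdapp, if_pos hxB, one_mul]
        exact sub_ne_zero.mpr (Ne.symm hcne)
      have hdy : d.coeff y = 0 := by rw [hdapp, if_pos hyB]; ring
      have hdsub : d.coeff.support ⊆ B := by
        intro z hz
        rw [Finsupp.mem_support_iff, hdapp] at hz
        by_contra hzB
        rw [if_neg hzB, zero_mul] at hz
        exact hz rfl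
      have hcard : d.coeff.support.card ≤ n := by
        have hss : d.coeff.support ⊂ B :=
          Finset.ssubset_iff_of_subset hdsub |>.mpr ⟨y, hyB, by
            rw [Finsupp.mem_support_iff]; simpa using hdy⟩
        have := Finset.card_lt_card hss
        omega
      exact ih d.coeff.support hcard (ind_supp_mem' C hs d hdC)
        (Finsupp.mem_support_iff.mpr hdx)
  exact key c₀.coeff.support.card c₀.coeff.support le_rfl (ind_supp_mem' C hs c₀ hc₀C)
    (Finsupp.mem_support_iff.mpr hc₀x)

/-- every element of C lies in the span of class indicators -/
lemma mem_span_cl (hI : IsRightIdeal C) (hC : C ≠ ⊥)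
    (hs : ∀ a ∈ C, ∀ b ∈ C, schur a b ∈ C) :
    ∀ (n : ℕ) (c : MonoidAlgebra K G), c ∈ C → c.coeff.support.card ≤ n →
      c ∈ Submodule.span K (Set.range (fun x : G => (ind (cl C x) : MonoidAlgebra K G))) := by
  intro n
  induction n with
  | zero =>
    intro c hc hn
    have : c.coeff.support = ∅ := Finset.card_eq_zero.mp (Nat.le_zero.mp hn)
    rw [(MonoidAlgebra.coeff_inj (y := 0)).mp (Finsupp.support_eq_empty.mp this)]
    exact Submodule.zero_mem _
  | succ n ih =>
    intro c hc hn
    by_cases hc0 : c = 0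
    · rw [hc0]; exact Submodule.zero_mem _
    obtain ⟨x, hx⟩ := Finsupp.support_nonempty_iff.mpr (fun h => hc0 (MonoidAlgebra.coeff_injective h))
    have hxne : c.coeff x ≠ 0 := Finsupp.mem_support_iff.mp hx
    set c' : MonoidAlgebra K G := c - (c.coeff x) • ind (cl C x) with hc'
    have hc'C : c' ∈ C := C.sub_mem hc (C.smul_mem _ (ind_cl_mem C hI hC hs x))
    have hc'supp : c'.coeff.support ⊆ c.coeff.support.erase x := by
      intro z hz
      rw [Finsupp.mem_support_iff] at hz
      rw [Finset.mem_erase, Finsupp.mem_support_iff]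
      constructor
      · rintro rfl
        apply hz
        rw [hc', MonoidAlgebra.coeff_sub, Finsupp.sub_apply, MonoidAlgebra.coeff_smul, Finsupp.smul_apply, ind_apply,
          if_pos (mem_cl_self C _), smul_eq_mul, mul_one, sub_self]
      · intro hcz
        apply hz
        have hzcl : z ∉ cl C x := by
          rw [mem_cl_iff]
          push_neg
          exact ⟨c, hc, by rw [hcz]; exact (Ne.symm hxne)⟩
        rw [hc', MonoidAlgebra.coeff_sub, Finsupp.sub_apply, MonoidAlgebra.coeff_smul, Finsupp.smul_apply, ind_apply, if_neg hzcl,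
          smul_eq_mul, mul_zero, sub_zero, hcz]
    have hcard : c'.coeff.support.card ≤ n := by
      have h1 := Finset.card_le_card hc'supp
      have h2 := Finset.card_erase_of_mem hx
      omega
    have hc'span := ih c' hc'C hcard
    have : c = c' + (c.coeff x) • ind (cl C x) := by rw [hc']; abel
    rw [this]
    exact Submodule.add_mem _ hc'span
      (Submodule.smul_mem _ _ (Submodule.subset_span ⟨x, rfl⟩))


lemma cl_one_mul_mem (hI : IsRightIdeal C) {a b : G} (ha : a ∈ cl C 1) (hb : b ∈ cl C 1) :
    a * b ∈ cl C 1 := by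
  have h1 := cl_translate C hI b ha
  rw [one_mul] at h1
  rwa [cl_eq_of_mem C hb] at h1

lemma cl_one_inv_mem (hI : IsRightIdeal C) {a : G} (ha : a ∈ cl C 1) : a⁻¹ ∈ cl C 1 := by
  have h1 := cl_translate C hI a⁻¹ ha
  rw [one_mul, mul_inv_cancel] at h1
  exact cl_symm C h1

noncomputable def clSubgroup (hI : IsRightIdeal C) : Subgroup G where
  carrier := ↑(cl C 1)
  one_mem' := mem_cl_self C 1
  mul_mem' := fun ha hb => cl_one_mul_mem C hI ha hb
  inv_mem' := fun ha => cl_one_inv_mem C hI ha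

lemma mem_clSubgroup_iff (hI : IsRightIdeal C) {x : G} :
    x ∈ clSubgroup C hI ↔ x ∈ cl C 1 := Iff.rfl


end helpers

/-- If a nonzero right ideal `C` satisfies `C * C = C` (Schur product), then
`C = (∑_{h ∈ H} h)·KG` for some subgroup `H ≤ G`; consequently `d(C) · dim C = |G|`. -/
theorem stmt13 {K G : Type*} [Field K] [Group G] [Fintype G]
    (C : Submodule K (MonoidAlgebra K G)) (hI : IsRightIdeal C) (hC : C ≠ ⊥)
    (heq : Submodule.span K
      {x : MonoidAlgebra K G | ∃ a ∈ C, ∃ b ∈ C, x = schur a b} = C) :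
    ∃ H : Subgroup G,
      C = LinearMap.range
        (LinearMap.mulLeft K (∑ h : H, MonoidAlgebra.of K G (h : G))) ∧
      ∀ d : ℕ, IsLeast {w | ∃ c ∈ C, c ≠ 0 ∧ c.coeff.support.card = w} d →
        d * Module.finrank K ↥C = Fintype.card G := by
  classical
  have hs : ∀ a ∈ C, ∀ b ∈ C, schur a b ∈ C := by
    intro a ha b hb
    rw [← heq]
    exact Submodule.subset_span ⟨a, ha, b, hb, rfl⟩
  set Hsub : Subgroup G := clSubgroup C hI with hHsub
  have he : (∑ h : Hsub, MonoidAlgebra.of K G (h : G)) = ind (cl C 1) := by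
    ext g
    rw [MonoidAlgebra.coeff_sum, Finset.sum_apply']
    simp only [MonoidAlgebra.of_apply, ind_apply]
    by_cases hg : g ∈ cl C 1
    · rw [if_pos hg, Finset.sum_eq_single (⟨g, hg⟩ : Hsub)]
      · simp [MonoidAlgebra.coeff_single, Finsupp.single_apply]
      · intro h _ hne
        rw [MonoidAlgebra.coeff_single, Finsupp.single_apply, if_neg]
        intro hc
        exact hne (Subtype.ext hc)
      · intro habs
        exact absurd (Finset.mem_univ _) habs
    · rw [if_neg hg, Finset.sum_eq_zero]
      intro h _
      rw [MonoidAlgebra.coeff_single, Finsupp.single_apply, if_neg]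
      rintro rfl
      exact hg h.2
  refine ⟨Hsub, ?_, ?_⟩
  · -- range equality
    rw [he]
    apply le_antisymm
    · intro c hc
      have hspan := mem_span_cl C hI hC hs c.coeff.support.card c hc le_rfl
      refine Submodule.span_le.mpr ?_ hspan
      rintro _ ⟨x, rfl⟩
      refine ⟨MonoidAlgebra.single x 1, ?_⟩
      rw [LinearMap.mulLeft_apply]
      ext y
      rw [MonoidAlgebra.coeff_mul_single_apply, mul_one, ind_apply, ind_apply]
      by_cases hy : y ∈ cl C x
      · rw [if_pos hy, if_pos ((mem_cl_iff_div C hI).mp hy)]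
      · rw [if_neg hy, if_neg (fun hmem => hy ((mem_cl_iff_div C hI).mpr hmem))]
    · rintro _ ⟨v, rfl⟩
      rw [LinearMap.mulLeft_apply]
      exact hI _ (ind_cl_mem C hI hC hs 1) v
  · -- the counting statement
    intro d hd
    -- quotient by right cosets
    set Q := Quotient (QuotientGroup.rightRel Hsub) with hQ
    haveI : Fintype Q := QuotientGroup.fintypeQuotientRightRel (s := Hsub)
    set φ : Q → MonoidAlgebra K G := fun q => ind (cl C q.out) with hφ
    have frel : ∀ u w : G, u * w⁻¹ ∈ cl C 1 → cl C u = cl C w := by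
      intro u w h
      exact cl_eq_of_mem C ((mem_cl_iff_div C hI).mpr h)
    have hout : ∀ x : G, cl C (Quotient.mk (QuotientGroup.rightRel Hsub) x).out = cl C x := by
      intro x
      have h := Quotient.mk_out (s := QuotientGroup.rightRel Hsub) x
      rw [QuotientGroup.rightRel_apply] at h
      exact (frel x _ h).symm
    -- linear independence of the class indicators
    have li : LinearIndependent K φ := by
      rw [linearIndependent_iff']
      intro s g hsum i hi
      have h0 : (∑ j ∈ s, g j • φ j).coeff i.out = (0 : MonoidAlgebra K G).coeff i.out := by rw [hsum]
      rw [MonoidAlgebra.coeff_sum, Finset.sum_apply'] at h0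
      rw [MonoidAlgebra.coeff_zero, Finsupp.coe_zero, Pi.zero_apply] at h0
      rw [Finset.sum_eq_single i] at h0
      · rw [MonoidAlgebra.coeff_smul, Finsupp.smul_apply, hφ, ind_apply, if_pos (mem_cl_self C _), smul_eq_mul,
          mul_one] at h0
        simpa using h0
      · intro j _ hji
        rw [MonoidAlgebra.coeff_smul, Finsupp.smul_apply, hφ, ind_apply, if_neg, smul_zero]
        intro hmem
        apply hji
        have : i.out * j.out⁻¹ ∈ Hsub := (mem_cl_iff_div C hI).mp hmem
        have hrel : Quotient.mk (QuotientGroup.rightRel Hsub) j.out =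
            Quotient.mk (QuotientGroup.rightRel Hsub) i.out :=
          Quotient.sound ((QuotientGroup.rightRel_apply).mpr this)
        rw [Quotient.out_eq, Quotient.out_eq] at hrel
        exact hrel
      · intro habs
        exact absurd hi habs
    -- span of the class indicators is C
    have hspan : Submodule.span K (Set.range φ) = C := by
      apply le_antisymm
      · rw [Submodule.span_le]
        rintro _ ⟨q, rfl⟩
        exact ind_cl_mem C hI hC hs _
      · intro c hc
        have h1 := mem_span_cl C hI hC hs c.coeff.support.card c hc le_rfl
        refine Submodule.span_le.mpr ?_ h1
        rintro _ ⟨x, rfl⟩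
        exact Submodule.subset_span ⟨Quotient.mk (QuotientGroup.rightRel Hsub) x, by
          rw [hφ]; simp only; rw [hout]⟩
    have hrank : Module.finrank K ↥C = Fintype.card Q := by
      rw [← hspan]
      exact finrank_span_eq_card li
    -- d is the cardinality of cl C 1
    have hcardcl : ∀ x : G, (cl C x).card = (cl C 1).card := by
      intro x
      have himg : cl C x = Finset.image (· * x) (cl C 1) := by
        ext y
        rw [mem_cl_iff_div C hI, Finset.mem_image]
        constructor
        · intro h
          exact ⟨y * x⁻¹, h, by group⟩
        · rintro ⟨z, hz, rfl⟩
          simpa using hz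
      rw [himg, Finset.card_image_of_injective _ (mul_left_injective x)]
    have hleast : IsLeast {w | ∃ c ∈ C, c ≠ 0 ∧ c.coeff.support.card = w} ((cl C 1).card) := by
      constructor
      · refine ⟨ind (cl C 1), ind_cl_mem C hI hC hs 1, ?_, by rw [ind_support]⟩
        intro h
        have h1 := ind_apply (K := K) (cl C 1) 1
        rw [h, if_pos (mem_cl_self C 1)] at h1
        simp at h1
      · rintro w ⟨c, hcC, hc0, rfl⟩
        obtain ⟨x, hx⟩ := Finsupp.support_nonempty_iff.mpr (fun h => hc0 (MonoidAlgebra.coeff_injective h))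
        have hsub : cl C x ⊆ c.coeff.support := by
          intro y hy
          rw [Finsupp.mem_support_iff]
          rw [mem_cl_iff C |>.mp hy c hcC]
          exact Finsupp.mem_support_iff.mp hx
        calc (cl C 1).card = (cl C x).card := (hcardcl x).symm
          _ ≤ c.coeff.support.card := Finset.card_le_card hsub
    have hdcl : d = (cl C 1).card := hd.unique hleast
    -- cardinality bookkeeping
    have hcardH : (cl C 1).card = Nat.card Hsub := by
      rw [← Nat.card_eq_finsetCard (cl C 1)]
      exact Nat.card_congr (Equiv.subtypeEquivRight (fun x => Iff.rfl))
    have hcardQ : Fintype.card Q = Nat.card (G ⧸ Hsub) := by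
      rw [← Nat.card_eq_fintype_card]
      exact Nat.card_congr (QuotientGroup.quotientRightRelEquivQuotientLeftRel Hsub)
    have htot := Subgroup.card_eq_card_quotient_mul_card_subgroup Hsub
    rw [Nat.card_eq_fintype_card] at htot
    rw [hdcl, hrank, hcardH, hcardQ, htot]
    ring
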